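/- There exists a constant C > 0 such that for every R > 0 and every h ∈ H²(ℝ³) with Δh supported in the ball {x ∈ ℝ³ : |x| ≤ R}, one has ‖∇h‖_{L²(ℝ³)} ≤ C R ‖Δh‖_{L²(ℝ³)}. -/

import Mathlib

noncomputable section

open MeasureTheory Real Metric
open scoped ENNReal NNReal InnerProductSpace

abbrev E3 := EuclideanSpace ℝ (Fin 3)

/-- The `i`-th coordinate direction in `ℝ³`. -/
noncomputable def e3 (i : Fin 3) : E3 := EuclideanSpace.single i 1

/-- Partial derivative of `h : ℝ³ → ℝ` in the `i`-th coordinate direction. -/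
noncomputable def dd (i : Fin 3) (h : E3 → ℝ) (x : E3) : ℝ := fderiv ℝ h x (e3 i)

/-- The Laplacian `Δh = Σᵢ ∂ᵢ∂ᵢ h`. -/
noncomputable def lap (h : E3 → ℝ) (x : E3) : ℝ := ∑ i, dd i (dd i h) x

/- ### auxiliary lemmas -/

lemma aux_mul_integrable {u v : E3 → ℝ} (hu : MemLp u 2 volume) (hv : MemLp v 2 volume) :
    Integrable (fun x => u x * v x) volume := by
  have h1 : (1 : ℝ≥0∞) / 1 = 1 / 2 + 1 / 2 := by
    norm_num [ENNReal.inv_two_add_inv_two]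
  have := hu.smul (r := 1) hv
  exact memLp_one_iff_integrable.mp (by rw [← Pi.mul_def]; simpa [smul_eq_mul, mul_comm] using this)

lemma aux_fderiv_apply_eq (h : E3 → ℝ) (x : E3) (i : Fin 3) :
    fderiv ℝ h x (e3 i) = gradient h x i := by
  have : inner ℝ (gradient h x) (e3 i) = fderiv ℝ h x (e3 i) := by rw [gradient]; simp
  rw [← this, e3, real_inner_comm, EuclideanSpace.inner_single_left]
  simp

lemma aux_dd_contDiff {h : E3 → ℝ} (hh : ContDiff ℝ 2 h) (i : Fin 3) :
    ContDiff ℝ 1 (dd i h) :=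
  (ContinuousLinearMap.apply ℝ ℝ (e3 i)).contDiff.comp (hh.fderiv_right (le_refl _))

lemma aux_norm_grad_sq (h : E3 → ℝ) (x : E3) :
    ‖gradient h x‖ ^ 2 = ∑ i, (dd i h x) ^ 2 := by
  rw [EuclideanSpace.norm_eq, Real.sq_sqrt (by positivity)]
  refine Finset.sum_congr rfl fun i _ => ?_
  rw [dd, aux_fderiv_apply_eq]
  simp [sq_abs]

/-- Integration by parts. -/
lemma aux_ibp {h : E3 → ℝ} (hh : ContDiff ℝ 2 h)
    (h0 : MemLp h 2 volume) (h1 : ∀ i, MemLp (dd i h) 2 volume)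
    (h2 : ∀ i j, MemLp (dd i (dd j h)) 2 volume) :
    ∫ x, ‖gradient h x‖ ^ 2 = - ∫ x, h x * lap h x := by
  have key : ∀ i : Fin 3, ∫ x, (dd i h x) ^ 2 = - ∫ x, h x * dd i (dd i h) x := by
    intro i
    have := integral_mul_fderiv_eq_neg_fderiv_mul_of_integrable (μ := volume)
      (f := h) (g := dd i h) (v := e3 i)
      (by simpa [dd, sq] using aux_mul_integrable (h1 i) (h1 i))
      (by simpa [dd] using aux_mul_integrable h0 (h2 i i))
      (aux_mul_integrable h0 (h1 i))
      (fun x _ => hh.differentiable (by norm_num) x)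
      (fun x _ => (aux_dd_contDiff hh i).differentiable (by norm_num) x)
    -- this : ∫ x, h x * fderiv ℝ (dd i h) x (e3 i) = - ∫ x, fderiv ℝ h x (e3 i) * dd i h x
    have e1 : (fun x => h x * fderiv ℝ (dd i h) x (e3 i)) = fun x => h x * dd i (dd i h) x := rfl
    have e2 : (fun x => fderiv ℝ h x (e3 i) * dd i h x) = fun x => (dd i h x) ^ 2 := by
      funext x; rw [sq]; rfl
    rw [e1, e2] at this
    rw [this, neg_neg]
  calc ∫ x, ‖gradient h x‖ ^ 2 = ∫ x, ∑ i, (dd i h x) ^ 2 := by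
        simp_rw [aux_norm_grad_sq]
    _ = ∑ i, ∫ x, (dd i h x) ^ 2 := by
        refine integral_finset_sum _ fun i _ => ?_
        simpa [sq] using aux_mul_integrable (h1 i) (h1 i)
    _ = ∑ i : Fin 3, - ∫ x, h x * dd i (dd i h) x := by simp_rw [key]
    _ = - ∑ i : Fin 3, ∫ x, h x * dd i (dd i h) x := by rw [Finset.sum_neg_distrib]
    _ = - ∫ x, ∑ i, h x * dd i (dd i h) x := by
        rw [integral_finset_sum _ fun i _ => aux_mul_integrable h0 (h2 i i)]
    _ = - ∫ x, h x * lap h x := by simp_rw [lap, Finset.mul_sum]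

noncomputable def bump : ContDiffBump (0 : E3) := ⟨1, 2, one_pos, one_lt_two⟩

lemma exists_M : ∃ M : ℝ, 0 ≤ M ∧ ∀ x, ‖fderiv ℝ (bump : E3 → ℝ) x‖ ≤ M := by
  obtain ⟨M, hM⟩ := (bump.hasCompactSupport.fderiv (𝕜 := ℝ)).exists_bound_of_continuous
    ((bump.contDiff (n := ⊤)).continuous_fderiv (by simp))
  exact ⟨max M 0, le_max_right _ _, fun x => (hM x).trans (le_max_left _ _)⟩

section cutoff
variable {t : ℝ} (ht : 0 < t)

noncomputable def chi (t : ℝ) : E3 → ℝ := fun x => bump (t⁻¹ • x)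

lemma chi_contDiff : ContDiff ℝ 1 (chi t) :=
  bump.contDiff.comp ((t⁻¹ • ContinuousLinearMap.id ℝ E3).contDiff)

lemma chi_compSupp (ht : 0 < t) : HasCompactSupport (chi t) := by
  have : chi t = (bump : E3 → ℝ) ∘ (Homeomorph.smulOfNeZero (t⁻¹) (inv_ne_zero ht.ne')) := rfl
  rw [this]
  exact bump.hasCompactSupport.comp_homeomorph _

lemma chi_one (ht : 0 < t) (x : E3) (hx : ‖x‖ ≤ t) : chi t x = 1 := by
  refine bump.one_of_mem_closedBall ?_
  simp only [mem_closedBall, dist_zero_right, norm_smul, norm_inv, Real.norm_eq_abs,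
    abs_of_pos ht]
  rw [inv_mul_le_iff₀ ht]
  have : bump.rIn = 1 := rfl
  rw [this, mul_one]
  exact hx

lemma chi_nonneg (x : E3) : 0 ≤ chi t x := bump.nonneg
lemma chi_le_one (x : E3) : chi t x ≤ 1 := bump.le_one

lemma chi_fderiv_bound (ht : 0 < t) {M : ℝ} (hM : ∀ x, ‖fderiv ℝ (bump : E3 → ℝ) x‖ ≤ M)
    (x : E3) : ‖fderiv ℝ (chi t) x‖ ≤ M / t := by
  set L : E3 →L[ℝ] E3 := t⁻¹ • ContinuousLinearMap.id ℝ E3 with hL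
  have hd : fderiv ℝ (chi t) x = (fderiv ℝ (bump : E3 → ℝ) (L x)).comp L := by
    have hcomp := fderiv_comp (𝕜 := ℝ) x
      (((bump.contDiff (n := 1)).differentiable (by norm_num)) (L x))
      L.differentiableAt
    rw [L.fderiv] at hcomp
    exact hcomp
  rw [hd]
  calc ‖(fderiv ℝ (bump : E3 → ℝ) (L x)).comp L‖
      ≤ ‖fderiv ℝ (bump : E3 → ℝ) (L x)‖ * ‖L‖ := ContinuousLinearMap.opNorm_comp_le _ _
    _ ≤ M * t⁻¹ := by
        refine mul_le_mul (hM _) ?_ (norm_nonneg _) ((norm_nonneg _).trans (hM (L x)))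
        rw [hL]
        calc ‖t⁻¹ • ContinuousLinearMap.id ℝ E3‖ ≤ ‖t⁻¹‖ * ‖ContinuousLinearMap.id ℝ E3‖ := by

              exact norm_smul_le (t⁻¹) (ContinuousLinearMap.id ℝ E3)
          _ ≤ ‖t⁻¹‖ * 1 := by
              exact mul_le_mul_of_nonneg_left ContinuousLinearMap.norm_id_le (norm_nonneg _)
          _ = t⁻¹ := by rw [mul_one, Real.norm_eq_abs, abs_of_pos (inv_pos.mpr ht)]
    _ = M / t := by rw [div_eq_mul_inv]
end cutoff

noncomputable def C6 : NNReal := eLpNormLESNormFDerivOfEqInnerConst (volume : Measure E3) 2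

lemma gns {u : E3 → ℝ} (hu : ContDiff ℝ 1 u) (h2u : HasCompactSupport u) :
    eLpNorm u 6 volume ≤ (C6 : ℝ≥0∞) * eLpNorm (fderiv ℝ u) 2 volume := by
  have h3 : Module.finrank ℝ E3 = 3 := by simp [finrank_euclideanSpace]
  have := eLpNorm_le_eLpNorm_fderiv_of_eq_inner (volume : Measure E3) hu h2u
    (p := 2) (p' := 6) (by norm_num) (by rw [h3]; norm_num) (by rw [h3]; norm_num)
  simpa [C6] using this

lemma sobolev_cutoff {h : E3 → ℝ} (hh : ContDiff ℝ 2 h) {t M : ℝ} (ht : 0 < t)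
    (hM0 : 0 ≤ M) (hM : ∀ x, ‖fderiv ℝ (bump : E3 → ℝ) x‖ ≤ M) :
    eLpNorm (fun x => chi t x * h x) 6 volume ≤
      (C6 : ℝ≥0∞) * (eLpNorm (fderiv ℝ h) 2 volume
        + ENNReal.ofReal (M / t) * eLpNorm h 2 volume) := by
  have hh1 : ContDiff ℝ 1 h := hh.of_le (by norm_num)
  have hu : ContDiff ℝ 1 (fun x => chi t x * h x) := chi_contDiff.mul hh1
  have hcs : HasCompactSupport (fun x => chi t x * h x) := by
    have := (chi_compSupp ht).mul_right (f' := h)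
    exact this
  refine (gns hu hcs).trans ?_
  refine mul_le_mul_right ?_ _
  have hfd : (fun x => fderiv ℝ (fun y => chi t y * h y) x)
      = fun x => chi t x • fderiv ℝ h x + h x • fderiv ℝ (chi t) x := by
    funext x
    exact fderiv_fun_mul (chi_contDiff.differentiable (by norm_num) x) (hh1.differentiable (by norm_num) x)
  have hcont_fh : Continuous (fderiv ℝ h) := hh.continuous_fderiv (by norm_num)
  have hcont_fchi : Continuous (fderiv ℝ (chi t)) := by
    have : ContDiff ℝ 2 (chi t) :=
      bump.contDiff.comp ((t⁻¹ • ContinuousLinearMap.id ℝ E3).contDiff)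
    exact this.continuous_fderiv (by norm_num)
  calc eLpNorm (fderiv ℝ fun x => chi t x * h x) 2 volume
      = eLpNorm (fun x => chi t x • fderiv ℝ h x + h x • fderiv ℝ (chi t) x) 2 volume := by
        rw [← hfd]
    _ ≤ eLpNorm (fun x => chi t x • fderiv ℝ h x) 2 volume
        + eLpNorm (fun x => h x • fderiv ℝ (chi t) x) 2 volume := by
        refine eLpNorm_add_le (f := fun x => chi t x • fderiv ℝ h x)
          (g := fun x => h x • fderiv ℝ (chi t) x) ?_ ?_ (by norm_num)
        · exact ((chi_contDiff.continuous).smul hcont_fh).aestronglyMeasurable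
        · exact ((hh1.continuous).smul hcont_fchi).aestronglyMeasurable
    _ ≤ eLpNorm (fderiv ℝ h) 2 volume + ENNReal.ofReal (M / t) * eLpNorm h 2 volume := by
        refine add_le_add ?_ ?_
        · refine le_trans (eLpNorm_mono_real (g := fun x => ‖fderiv ℝ h x‖) ?_) ?_
          · intro x
            rw [norm_smul, Real.norm_eq_abs, abs_of_nonneg (chi_nonneg x)]
            exact mul_le_of_le_one_left (norm_nonneg _) (chi_le_one x)
          · rw [eLpNorm_norm]
        · refine le_trans (eLpNorm_mono_real (g := fun x => (M / t) * ‖h x‖) ?_) ?_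
          · intro x
            rw [norm_smul]
            rw [mul_comm]
            exact mul_le_mul (chi_fderiv_bound ht hM x) le_rfl (norm_nonneg _)
              (div_nonneg hM0 ht.le)
          · have : (fun x => (M / t) * ‖h x‖) = (M / t) • (fun x => ‖h x‖) := rfl
            rw [this, eLpNorm_const_smul, eLpNorm_norm]
            refine mul_le_mul_left ?_ _
            rw [← Real.enorm_eq_ofReal (div_nonneg hM0 ht.le)]

lemma restriction {h : E3 → ℝ} (hh : ContDiff ℝ 2 h) {R t M : ℝ} (hR : 0 < R) (htR : R ≤ t)
    (hM0 : 0 ≤ M) (hM : ∀ x, ‖fderiv ℝ (bump : E3 → ℝ) x‖ ≤ M) :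
    eLpNorm (Set.indicator (closedBall (0:E3) R) h) 2 volume
      ≤ (ENNReal.ofReal R * (volume (ball (0:E3) 1)) ^ ((1:ℝ)/3) * C6)
          * (eLpNorm (fderiv ℝ h) 2 volume + ENNReal.ofReal (M / t) * eLpNorm h 2 volume) := by
  have ht : 0 < t := hR.trans_le htR
  set B := closedBall (0:E3) R with hBdef
  have hB : MeasurableSet B := measurableSet_closedBall
  set u := fun x => chi t x * h x with hu
  have hcont : Continuous u := (chi_contDiff.continuous).mul (hh.continuous)
  have step2 : eLpNorm h 2 (volume.restrict B) = eLpNorm u 2 (volume.restrict B) := by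
    refine eLpNorm_congr_ae ((ae_restrict_iff' hB).mpr (ae_of_all _ fun x hx => ?_))
    have hxn : ‖x‖ ≤ t := by
      rw [hBdef, mem_closedBall, dist_zero_right] at hx
      exact hx.trans htR
    rw [hu]; simp only [chi_one ht x hxn, one_mul]
  have step3 : eLpNorm u 2 (volume.restrict B)
      ≤ eLpNorm u 6 (volume.restrict B) * (volume B) ^ ((1:ℝ)/3) := by
    have := eLpNorm_le_eLpNorm_mul_rpow_measure_univ (p := 2) (q := 6)
      (by norm_num) (hcont.aestronglyMeasurable (μ := volume.restrict B))
    rw [Measure.restrict_apply_univ] at this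
    convert this using 2
    norm_num
  have step4 : eLpNorm u 6 (volume.restrict B) ≤ eLpNorm u 6 volume :=
    eLpNorm_mono_measure _ Measure.restrict_le_self
  have step5 : (volume B) ^ ((1:ℝ)/3)
      = ENNReal.ofReal R * (volume (ball (0:E3) 1)) ^ ((1:ℝ)/3) := by
    rw [hBdef, Measure.addHaar_closedBall _ _ hR.le]
    have h3 : Module.finrank ℝ E3 = 3 := by simp [finrank_euclideanSpace]
    rw [h3, ENNReal.mul_rpow_of_nonneg _ _ (by norm_num), ENNReal.ofReal_pow hR.le,
      ← ENNReal.rpow_natCast (ENNReal.ofReal R) 3, ← ENNReal.rpow_mul]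
    norm_num
  calc eLpNorm (Set.indicator B h) 2 volume
      = eLpNorm u 2 (volume.restrict B) := by
        rw [eLpNorm_indicator_eq_eLpNorm_restrict hB, step2]
    _ ≤ eLpNorm u 6 volume * (volume B) ^ ((1:ℝ)/3) := by
        exact le_trans step3 (mul_le_mul_left step4 _)
    _ ≤ ((C6 : ℝ≥0∞) * (eLpNorm (fderiv ℝ h) 2 volume
          + ENNReal.ofReal (M / t) * eLpNorm h 2 volume)) * (volume B) ^ ((1:ℝ)/3) := by
        exact mul_le_mul_left (sobolev_cutoff hh ht hM0 hM) _
    _ = _ := by rw [step5]; ring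

lemma restriction_limit {h : E3 → ℝ} (hh : ContDiff ℝ 2 h) {R : ℝ} (hR : 0 < R)
    (h0 : MemLp h 2 volume) :
    eLpNorm (Set.indicator (closedBall (0:E3) R) h) 2 volume
      ≤ (ENNReal.ofReal R * (volume (ball (0:E3) 1)) ^ ((1:ℝ)/3) * C6)
          * eLpNorm (fderiv ℝ h) 2 volume := by
  obtain ⟨M, hM0, hM⟩ := exists_M
  set c : ℝ≥0∞ := ENNReal.ofReal R * (volume (ball (0:E3) 1)) ^ ((1:ℝ)/3) * C6 with hc
  have hcfin : c ≠ ∞ := by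
    rw [hc]
    refine ENNReal.mul_ne_top (ENNReal.mul_ne_top ENNReal.ofReal_ne_top ?_) ENNReal.coe_ne_top
    exact ENNReal.rpow_ne_top_of_nonneg (by norm_num) measure_ball_lt_top.ne
  set K : ℝ≥0∞ := c * eLpNorm h 2 volume with hK
  have hKfin : K ≠ ∞ := ENNReal.mul_ne_top hcfin h0.eLpNorm_ne_top
  set D := eLpNorm (fderiv ℝ h) 2 volume with hD
  have key : ∀ t : ℝ, R ≤ t →
      eLpNorm (Set.indicator (closedBall (0:E3) R) h) 2 volume
        ≤ c * D + ENNReal.ofReal (M / t) * K := by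
    intro t htR
    refine (restriction hh hR htR hM0 hM).trans ?_
    rw [hK, hc]; ring_nf; exact le_of_eq (by ring)
  -- limiting argument
  refine ENNReal.le_of_forall_pos_le_add fun ε hε hfin => ?_
  rcases eq_or_ne K 0 with hK0 | hK0
  · refine (key R le_rfl).trans ?_
    rw [hK0, mul_zero, add_zero]
    exact le_self_add
  · have hKpos : 0 < K.toReal := ENNReal.toReal_pos hK0 hKfin
    set δ : ℝ := (ε : ℝ) / (K.toReal + 1) with hδ
    have hδpos : 0 < δ := div_pos (by exact_mod_cast hε) (by positivity)
    set t : ℝ := max R (M / δ) with htdef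
    have htR : R ≤ t := le_max_left _ _
    have ht : 0 < t := hR.trans_le htR
    have hMt : M / t ≤ δ := by
      rw [div_le_iff₀ ht]
      calc M = δ * (M / δ) := by field_simp
        _ ≤ δ * t := by
            exact mul_le_mul_of_nonneg_left (le_max_right _ _) hδpos.le
    refine (key t htR).trans (add_le_add_right ?_ _)
    calc ENNReal.ofReal (M / t) * K ≤ ENNReal.ofReal δ * ENNReal.ofReal K.toReal := by
          exact mul_le_mul' (ENNReal.ofReal_le_ofReal hMt) (ENNReal.ofReal_toReal hKfin).ge
      _ = ENNReal.ofReal (δ * K.toReal) := by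
          rw [ENNReal.ofReal_mul hδpos.le]
      _ ≤ ENNReal.ofReal (ε : ℝ) := by
          refine ENNReal.ofReal_le_ofReal ?_
          rw [hδ, div_mul_eq_mul_div, div_le_iff₀ (by positivity)]
          have : (0:ℝ) ≤ ε := by positivity
          nlinarith [hKpos, this]
      _ = (ε : ℝ≥0∞) := ENNReal.ofReal_coe_nnreal

variable {F : Type*} [NormedAddCommGroup F] [InnerProductSpace ℝ F]

lemma aux_inner_toLp {u v : E3 → F} (hu : MemLp u 2 volume) (hv : MemLp v 2 volume) :
    (inner ℝ (hu.toLp u) (hv.toLp v) : ℝ) = ∫ x, ⟪u x, v x⟫_ℝ := by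
  rw [L2.inner_def]
  refine integral_congr_ae ?_
  filter_upwards [hu.coeFn_toLp, hv.coeFn_toLp] with x h1 h2
  rw [h1, h2]

lemma aux_integral_normsq {g : E3 → F} (hg : MemLp g 2 volume) :
    ∫ x, ‖g x‖ ^ 2 = ((eLpNorm g 2 volume).toReal) ^ 2 := by
  have h1 : ∫ x, ‖g x‖ ^ 2 = ∫ x, ⟪g x, g x⟫_ℝ := by
    refine integral_congr_ae (ae_of_all _ fun x => ?_)
    simp only []
    rw [real_inner_self_eq_norm_sq]
  rw [h1, ← aux_inner_toLp hg hg, real_inner_self_eq_norm_sq, Lp.norm_toLp]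

lemma aux_cs {u v : E3 → ℝ} (hu : MemLp u 2 volume) (hv : MemLp v 2 volume) :
    |∫ x, u x * v x| ≤ (eLpNorm u 2 volume).toReal * (eLpNorm v 2 volume).toReal := by
  have h1 : ∫ x, u x * v x = (inner ℝ (hu.toLp u) (hv.toLp v) : ℝ) := by
    rw [aux_inner_toLp hu hv]
    refine integral_congr_ae (ae_of_all _ fun x => ?_)
    simp [real_inner_comm, mul_comm]
  rw [h1, ← Lp.norm_toLp u hu, ← Lp.norm_toLp v hv]
  exact abs_real_inner_le_norm _ _

lemma aux_norm_grad_le (h : E3 → ℝ) (x : E3) :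
    ‖gradient h x‖ ≤ ∑ i, ‖dd i h x‖ := by
  rw [EuclideanSpace.norm_eq]
  have key : ∑ i, ‖gradient h x i‖ ^ 2 ≤ (∑ i, ‖gradient h x i‖) ^ 2 := by
    refine Finset.sum_sq_le_sq_sum_of_nonneg fun i _ => norm_nonneg _
  refine le_trans ((Real.sqrt_le_sqrt key).trans_eq (Real.sqrt_sq (by positivity))) ?_
  refine le_of_eq (Finset.sum_congr rfl fun i _ => ?_)
  rw [dd, aux_fderiv_apply_eq]

lemma aux_grad_norm_fderiv (h : E3 → ℝ) (x : E3) : ‖gradient h x‖ = ‖fderiv ℝ h x‖ := by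
  rw [gradient]; exact LinearIsometryEquiv.norm_map _ _

lemma aux_memlp_gradient {h : E3 → ℝ} (hh : ContDiff ℝ 2 h)
    (h1 : ∀ i, MemLp (dd i h) 2 volume) : MemLp (gradient h) 2 volume := by
  have hcont : Continuous (gradient h) := by
    have hf : Continuous (fderiv ℝ h) := hh.continuous_fderiv (by norm_num)
    exact ((InnerProductSpace.toDual ℝ E3).symm.continuous).comp hf
  have hsum : MemLp (fun x => ∑ i, ‖dd i h x‖) 2 volume :=
    memLp_finset_sum _ (fun i _ => (h1 i).norm)
  refine hsum.of_le hcont.aestronglyMeasurable (ae_of_all _ fun x => ?_)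
  refine (aux_norm_grad_le h x).trans (le_abs_self _)

lemma aux_memlp_fderiv {h : E3 → ℝ} (hh : ContDiff ℝ 2 h)
    (h1 : ∀ i, MemLp (dd i h) 2 volume) : MemLp (fderiv ℝ h) 2 volume := by
  have hsum : MemLp (fun x => ∑ i, ‖dd i h x‖) 2 volume :=
    memLp_finset_sum _ (fun i _ => (h1 i).norm)
  refine hsum.of_le (hh.continuous_fderiv (by norm_num)).aestronglyMeasurable
    (ae_of_all _ fun x => ?_)
  rw [← aux_grad_norm_fderiv]
  refine (aux_norm_grad_le h x).trans (le_abs_self _)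

lemma aux_elpnorm_grad_fderiv (h : E3 → ℝ) :
    eLpNorm (gradient h) 2 volume = eLpNorm (fderiv ℝ h) 2 volume := by
  rw [← eLpNorm_norm (gradient h), ← eLpNorm_norm (fderiv ℝ h)]
  congr 1
  funext x
  exact aux_grad_norm_fderiv h x

lemma aux_memlp_lap {h : E3 → ℝ} (h2 : ∀ i j, MemLp (dd i (dd j h)) 2 volume) :
    MemLp (lap h) 2 volume := by
  have : MemLp (fun x => ∑ i, dd i (dd i h) x) 2 volume :=
    memLp_finset_sum _ (fun i _ => h2 i i)
  exact this

/-- **Gradient estimate with support:** if `Δh` is supported in `{|x| ≤ R}` then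
`‖∇h‖_{L²} ≤ C R ‖Δh‖_{L²}` for `h ∈ H²(ℝ³)`. -/
theorem gradient_estimate_support :
    ∃ C : ℝ, 0 < C ∧ ∀ R : ℝ, 0 < R → ∀ h : E3 → ℝ,
      ContDiff ℝ 2 h →
      MemLp h 2 volume →
      (∀ i, MemLp (dd i h) 2 volume) →
      (∀ i j, MemLp (dd i (dd j h)) 2 volume) →
      (∀ x, R < ‖x‖ → lap h x = 0) →
      Real.sqrt (∫ x, ‖gradient h x‖ ^ 2)
        ≤ C * R * Real.sqrt (∫ x, (lap h x) ^ 2) := by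
  set V : ℝ≥0∞ := (volume (Metric.ball (0:E3) 1)) ^ ((1:ℝ)/3) * C6 with hV
  have hVfin : V ≠ ∞ := ENNReal.mul_ne_top
    (ENNReal.rpow_ne_top_of_nonneg (by norm_num) measure_ball_lt_top.ne) ENNReal.coe_ne_top
  set C : ℝ := V.toReal + 1 with hCdef
  have hCpos : 0 < C := by positivity
  refine ⟨C, hCpos, ?_⟩
  intro R hR h hh h0 h1 h2 hsupp
  set k := Set.indicator (Metric.closedBall (0:E3) R) h with hk
  have hkmem : MemLp k 2 volume := h0.indicator measurableSet_closedBall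
  have hGmem : MemLp (gradient h) 2 volume := aux_memlp_gradient hh h1
  have hFmem : MemLp (lap h) 2 volume := aux_memlp_lap h2
  set G : ℝ := (eLpNorm (gradient h) 2 volume).toReal with hGdef
  set Fq : ℝ := (eLpNorm (lap h) 2 volume).toReal with hFdef
  have hG0 : 0 ≤ G := ENNReal.toReal_nonneg
  have hF0 : 0 ≤ Fq := ENNReal.toReal_nonneg
  set A := ∫ x, ‖gradient h x‖ ^ 2 with hA
  set B := ∫ x, (lap h x) ^ 2 with hB
  have hAG : A = G ^ 2 := aux_integral_normsq hGmem
  have hBF : B = Fq ^ 2 := by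
    have := aux_integral_normsq (F := ℝ) hFmem
    simpa [Real.norm_eq_abs, sq_abs] using this
  have sqrtA : Real.sqrt A = G := by rw [hAG, Real.sqrt_sq hG0]
  have sqrtB : Real.sqrt B = Fq := by rw [hBF, Real.sqrt_sq hF0]
  have ibp : A = - ∫ x, h x * lap h x := aux_ibp hh h0 h1 h2
  have hsup2 : (fun x => -(h x * lap h x)) = fun x => (- k x) * lap h x := by
    funext x
    by_cases hx : ‖x‖ ≤ R
    · rw [hk, Set.indicator_of_mem
        (by simpa [Metric.mem_closedBall, dist_zero_right] using hx)]
      ring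
    · rw [hsupp x (lt_of_not_ge hx), hk]
      simp
  have hA_le : A ≤ (eLpNorm k 2 volume).toReal * Fq := by
    rw [ibp, ← integral_neg]
    calc ∫ x, -(h x * lap h x) = ∫ x, (- k x) * lap h x := by rw [hsup2]
      _ ≤ |∫ x, (- k x) * lap h x| := le_abs_self _
      _ ≤ (eLpNorm (fun x => - k x) 2 volume).toReal * Fq := aux_cs hkmem.neg hFmem
      _ = (eLpNorm k 2 volume).toReal * Fq := by
          congr 1
          have : (fun x => - k x) = -k := rfl
          rw [this, eLpNorm_neg]
  have hrest : eLpNorm k 2 volume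
      ≤ ENNReal.ofReal R * V * eLpNorm (gradient h) 2 volume := by
    have := restriction_limit hh hR h0
    rw [← aux_elpnorm_grad_fderiv] at this
    refine this.trans (le_of_eq ?_)
    rw [hV]; ring
  have hKR : (eLpNorm k 2 volume).toReal ≤ R * V.toReal * G := by
    have hfin : ENNReal.ofReal R * V * eLpNorm (gradient h) 2 volume ≠ ∞ :=
      ENNReal.mul_ne_top (ENNReal.mul_ne_top ENNReal.ofReal_ne_top hVfin) hGmem.eLpNorm_ne_top
    refine (ENNReal.toReal_mono hfin hrest).trans (le_of_eq ?_)
    rw [ENNReal.toReal_mul, ENNReal.toReal_mul, ENNReal.toReal_ofReal hR.le]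
  have final : A ≤ (C * R * Fq) * G := by
    refine hA_le.trans ?_
    have h1' : (eLpNorm k 2 volume).toReal * Fq ≤ (R * V.toReal * G) * Fq :=
      mul_le_mul_of_nonneg_right hKR hF0
    refine h1'.trans ?_
    have hVC : V.toReal ≤ C := by rw [hCdef]; linarith
    have : R * V.toReal * G ≤ C * R * G := by
      calc R * V.toReal * G ≤ R * C * G :=
            mul_le_mul_of_nonneg_right (mul_le_mul_of_nonneg_left hVC hR.le) hG0
        _ = C * R * G := by ring
    nlinarith [mul_le_mul_of_nonneg_right this hF0]
  rw [sqrtA, sqrtB]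
  rcases eq_or_lt_of_le hG0 with hG | hG
  · rw [← hG]
    positivity
  · have : G * G ≤ (C * R * Fq) * G := by
      calc G * G = A := by rw [hAG]; ring
        _ ≤ (C * R * Fq) * G := final
    exact le_of_mul_le_mul_right this hG
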